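/- Let n ≥ 1 and let A be an n×n matrix with integer entries. Then per A ≡ N (mod 2), where N is the number of subsets T ⊆ {1,…,n} with the property that for every row index i, the sum ∑_{j ∉ T} A_{i,j} is odd (i.e., zeroing out the columns with indices in T leaves all n row sums odd). -/

import Mathlib

open Matrix Finset

lemma card_supersets {α : Type*} [Fintype α] [DecidableEq α] (R : Finset α) :
    (Finset.univ.filter fun S => R ⊆ S).card = 2 ^ (Rᶜ.card) := by
  rw [← Finset.card_powerset]
  apply Finset.card_bij' (fun S _ => S \ R) (fun U _ => U ∪ R)
  · intro S hS
    simp only [Finset.mem_powerset]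
    intro x hx
    simp_all [Finset.mem_sdiff, Finset.mem_compl]
  · intro U hU
    simp only [Finset.mem_filter, Finset.mem_univ, true_and]
    exact Finset.subset_union_right
  · intro S hS
    simp only [Finset.mem_filter, Finset.mem_univ, true_and] at hS
    rw [Finset.sdiff_union_of_subset hS]
  · intro U hU
    simp only [Finset.mem_powerset] at hU
    rw [Finset.union_sdiff_right]
    exact Finset.sdiff_eq_self_of_disjoint (Finset.disjoint_left.mpr fun x hx => by
      have := hU hx; simpa [Finset.mem_compl] using this)

theorem stmt_15 (n : ℕ) (hn : 1 ≤ n) (A : Matrix (Fin n) (Fin n) ℤ) :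
    A.permanent ≡
      ((Finset.univ.filter
          (fun T : Finset (Fin n) => ∀ i, Odd (∑ j ∈ Tᶜ, A i j))).card : ℤ) [ZMOD 2] := by
  suffices h : ((A.permanent : ℤ) : ZMod 2) =
      (((Finset.univ.filter
          (fun T : Finset (Fin n) => ∀ i, Odd (∑ j ∈ Tᶜ, A i j))).card : ℤ) : ZMod 2) by
    exact (ZMod.intCast_eq_intCast_iff _ _ 2).mp h
  set B : Matrix (Fin n) (Fin n) (ZMod 2) := A.map (Int.cast) with hB
  have hBapply : ∀ i j, B i j = ((A i j : ℤ) : ZMod 2) := fun i j => rfl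
  have h2 : (2 : ZMod 2) = 0 := rfl
  have hcast : ((A.permanent : ℤ) : ZMod 2) = B.permanent := by
    simp only [Matrix.permanent]
    push_cast
    rfl
  rw [hcast]
  have key : B.permanent = ∑ S : Finset (Fin n), ∏ i, ∑ j ∈ S, B i j := by
    calc B.permanent = Bᵀ.permanent := (permanent_transpose B).symm
      _ = ∑ σ : Equiv.Perm (Fin n), ∏ i, B i (σ i) := by
          simp [Matrix.permanent, Matrix.transpose_apply]
      _ = ∑ f ∈ Finset.univ.filter (fun f : Fin n → Fin n => Function.Bijective f),
            ∏ i, B i (f i) := by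
          apply Finset.sum_bij (fun (σ : Equiv.Perm (Fin n)) _ => ⇑σ)
          · intro σ _
            simp only [Finset.mem_filter, Finset.mem_univ, true_and]
            exact σ.bijective
          · intro σ _ τ _ h
            exact Equiv.coe_fn_injective h
          · intro f hf
            simp only [Finset.mem_filter, Finset.mem_univ, true_and] at hf
            exact ⟨Equiv.ofBijective f hf, Finset.mem_univ _, rfl⟩
          · intro σ _
            rfl
      _ = ∑ f : Fin n → Fin n,
            (((Finset.univ.filter fun S : Finset (Fin n) =>
              (Finset.univ.image f) ⊆ S).card : ℕ) : ZMod 2) * ∏ i, B i (f i) := by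
          rw [Finset.sum_filter]
          apply Finset.sum_congr rfl
          intro f _
          rw [card_supersets]
          by_cases hf : Function.Bijective f
          · have himg : Finset.univ.image f = Finset.univ :=
              Finset.image_univ_of_surjective hf.2
            rw [if_pos hf, himg]
            simp
          · have h1 : Finset.univ.image f ≠ Finset.univ := by
              intro h
              exact hf (Finite.surjective_iff_bijective.mp
                (fun y => by
                  have : y ∈ Finset.univ.image f := by rw [h]; exact Finset.mem_univ y
                  obtain ⟨x, _, hx⟩ := Finset.mem_image.mp this
                  exact ⟨x, hx⟩))
            have h0 : 0 < (Finset.univ.image f)ᶜ.card := by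
              rw [Finset.card_pos, Finset.nonempty_iff_ne_empty]
              intro hc
              exact h1 (by rwa [Finset.compl_eq_empty_iff] at hc)
            rw [if_neg hf]
            push_cast
            rw [h2, zero_pow h0.ne', zero_mul]
      _ = ∑ f : Fin n → Fin n,
            ∑ S ∈ Finset.univ.filter (fun S : Finset (Fin n) => ∀ i, f i ∈ S),
              ∏ i, B i (f i) := by
          apply Finset.sum_congr rfl
          intro f _
          rw [Finset.sum_const, nsmul_eq_mul]
          have : (Finset.univ.filter fun S : Finset (Fin n) => (Finset.univ.image f) ⊆ S)
              = Finset.univ.filter (fun S : Finset (Fin n) => ∀ i, f i ∈ S) := by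
            apply Finset.filter_congr
            intro S _
            simp [Finset.image_subset_iff]
          rw [this]
      _ = ∑ S : Finset (Fin n),
            ∑ f ∈ Finset.univ.filter (fun f : Fin n → Fin n => ∀ i, f i ∈ S),
              ∏ i, B i (f i) := by
          simp_rw [Finset.sum_filter]
          exact Finset.sum_comm
      _ = ∑ S : Finset (Fin n), ∏ i, ∑ j ∈ S, B i j := by
          apply Finset.sum_congr rfl
          intro S _
          rw [Finset.prod_univ_sum (t := fun _ => S) (f := fun i j => B i j)]
          apply Finset.sum_congr _ (fun _ _ => rfl)
          ext f
          simp [Fintype.mem_piFinset]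
  rw [key]
  have hinv : Function.Involutive (fun T : Finset (Fin n) => Tᶜ) := fun T => compl_compl T
  rw [← Fintype.sum_bijective _ hinv.bijective
    (fun T : Finset (Fin n) => ∏ i, ∑ j ∈ Tᶜ, B i j)
    (fun S => ∏ i, ∑ j ∈ S, B i j) (fun T => rfl)]
  have hterm : ∀ T : Finset (Fin n),
      (∏ i, ∑ j ∈ Tᶜ, B i j) = if (∀ i, Odd (∑ j ∈ Tᶜ, A i j)) then 1 else 0 := by
    intro T
    have hsum : ∀ i, (∑ j ∈ Tᶜ, B i j) = ((∑ j ∈ Tᶜ, A i j : ℤ) : ZMod 2) := by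
      intro i; push_cast; rfl
    by_cases h : ∀ i, Odd (∑ j ∈ Tᶜ, A i j)
    · rw [if_pos h]
      apply Finset.prod_eq_one
      intro i _
      obtain ⟨k, hk⟩ := h i
      rw [hsum i, hk]
      push_cast
      rw [h2]
      ring
    · rw [if_neg h]
      push_neg at h
      obtain ⟨i, hi⟩ := h
      apply Finset.prod_eq_zero (Finset.mem_univ i)
      obtain ⟨k, hk⟩ := Int.not_odd_iff_even.mp hi
      rw [hsum i, hk]
      push_cast
      rw [← two_mul, h2, zero_mul]
  simp_rw [hterm]
  rw [Finset.sum_boole]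
  push_cast
  rfl
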